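/- Let λ₁ > 0, λ₂ > 0, α > 0 and θ ∈ [-1, 1]. Then ∫₀^∞ λ₁ e^{-λ₁x₁} (∫₀^{αx₁} (1 + θ(1 - 2e^{-λ₁x₁})(1 - 2e^{-λ₂x₂})) λ₂ e^{-λ₂x₂} dx₂) dx₁ = λ₂α/(λ₁+λ₂α) + θλ₁·(2/(2λ₁+λ₂α) + 1/(λ₁+2λ₂α) - 2/(λ₁+λ₂α)). -/

import Mathlib

open MeasureTheory Real

lemma gwed_exp_val (b c : ℝ) (hb : 0 < b) :
    ∫ x in Set.Ioi (0 : ℝ), c * Real.exp (-b * x) = c / b := by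
  have h := integral_comp_mul_left_Ioi (fun x : ℝ => Real.exp (-x)) 0 hb
  simp only [mul_zero] at h
  rw [MeasureTheory.integral_const_mul]
  have : ∫ x in Set.Ioi (0 : ℝ), Real.exp (-b * x) = b⁻¹ := by
    simpa [neg_mul, integral_exp_neg_Ioi_zero, integral_exp_Iic_zero, smul_eq_mul] using h
  rw [this]; field_simp

lemma gwed_exp_int (b c : ℝ) (hb : 0 < b) :
    IntegrableOn (fun x : ℝ => c * Real.exp (-b * x)) (Set.Ioi (0 : ℝ)) := by
  simpa [neg_mul, IntegrableOn] using (exp_neg_integrableOn_Ioi 0 hb).const_mul c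

lemma gwed_inner (a b T : ℝ) :
    ∫ x in (0 : ℝ)..T, (1 + a * (1 - 2 * Real.exp (-b * x))) * (b * Real.exp (-b * x))
      = (1 - Real.exp (-b * T)) + a * (Real.exp (-(2 * b) * T) - Real.exp (-b * T)) := by
  have hder : ∀ x ∈ Set.uIcc (0 : ℝ) T,
      HasDerivAt (fun x => -(1 + a) * Real.exp (-b * x) + a * Real.exp (-(2 * b) * x))
        ((1 + a * (1 - 2 * Real.exp (-b * x))) * (b * Real.exp (-b * x))) x := by
    intro x _
    have h1 : HasDerivAt (fun x : ℝ => Real.exp (-b * x)) (Real.exp (-b * x) * (-b * 1)) x :=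
      ((hasDerivAt_id x).const_mul (-b)).exp
    have h2 : HasDerivAt (fun x : ℝ => Real.exp (-(2 * b) * x))
        (Real.exp (-(2 * b) * x) * (-(2 * b) * 1)) x :=
      ((hasDerivAt_id x).const_mul (-(2 * b))).exp
    have h := (h1.const_mul (-(1 + a))).add (h2.const_mul a)
    refine h.congr_deriv ?_
    rw [show -(2 * b) * x = -b * x + -b * x by ring, Real.exp_add]
    ring
  rw [intervalIntegral.integral_eq_sub_of_hasDerivAt hder ((by fun_prop : Continuous fun x => (1 + a * (1 - 2 * Real.exp (-b * x))) * (b * Real.exp (-b * x))).intervalIntegrable 0 T)]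
  simp only [mul_zero, Real.exp_zero]
  ring

lemma gwed_expand (l₁ l₂ α θ x : ℝ) :
    l₁ * Real.exp (-l₁ * x) *
        ((1 - Real.exp (-l₂ * (α * x)))
          + θ * (1 - 2 * Real.exp (-l₁ * x)) *
            (Real.exp (-(2 * l₂) * (α * x)) - Real.exp (-l₂ * (α * x))))
      = l₁ * Real.exp (-l₁ * x)
        + (-(1 + θ) * l₁) * Real.exp (-(l₁ + l₂ * α) * x)
        + (θ * l₁) * Real.exp (-(l₁ + 2 * l₂ * α) * x)
        + (-(2 * θ * l₁)) * Real.exp (-(2 * l₁ + 2 * l₂ * α) * x)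
        + (2 * θ * l₁) * Real.exp (-(2 * l₁ + l₂ * α) * x) := by
  rw [show -(l₁ + l₂ * α) * x = -l₁ * x + -l₂ * (α * x) by ring,
    show -(l₁ + 2 * l₂ * α) * x = -l₁ * x + -(2 * l₂) * (α * x) by ring,
    show -(2 * l₁ + 2 * l₂ * α) * x = -l₁ * x + (-l₁ * x + -(2 * l₂) * (α * x)) by ring,
    show -(2 * l₁ + l₂ * α) * x = -l₁ * x + (-l₁ * x + -l₂ * (α * x)) by ring,
    Real.exp_add, Real.exp_add, Real.exp_add, Real.exp_add, Real.exp_add, Real.exp_add]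
  ring

theorem gwed_prob_alpha_X1_gt_X2
    (l₁ l₂ α θ : ℝ) (hl₁ : 0 < l₁) (hl₂ : 0 < l₂) (hα : 0 < α)
    (hθ : θ ∈ Set.Icc (-1 : ℝ) 1) :
    (∫ x₁ in Set.Ioi (0 : ℝ),
        l₁ * Real.exp (-l₁ * x₁) *
          (∫ x₂ in (0 : ℝ)..(α * x₁),
            (1 + θ * (1 - 2 * Real.exp (-l₁ * x₁)) * (1 - 2 * Real.exp (-l₂ * x₂)))
              * (l₂ * Real.exp (-l₂ * x₂))))
      = l₂ * α / (l₁ + l₂ * α)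
        + θ * l₁ * (2 / (2 * l₁ + l₂ * α) + 1 / (l₁ + 2 * l₂ * α)
          - 2 / (l₁ + l₂ * α)) := by
  have hb1 : (0:ℝ) < l₁ := hl₁
  have hb2 : (0:ℝ) < l₁ + l₂ * α := by positivity
  have hb3 : (0:ℝ) < l₁ + 2 * l₂ * α := by positivity
  have hb4 : (0:ℝ) < 2 * l₁ + 2 * l₂ * α := by positivity
  have hb5 : (0:ℝ) < 2 * l₁ + l₂ * α := by positivity
  have hfun : ∀ x : ℝ,
      l₁ * Real.exp (-l₁ * x) *
          (∫ x₂ in (0 : ℝ)..(α * x),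
            (1 + θ * (1 - 2 * Real.exp (-l₁ * x)) * (1 - 2 * Real.exp (-l₂ * x₂)))
              * (l₂ * Real.exp (-l₂ * x₂)))
        = l₁ * Real.exp (-l₁ * x)
          + (-(1 + θ) * l₁) * Real.exp (-(l₁ + l₂ * α) * x)
          + (θ * l₁) * Real.exp (-(l₁ + 2 * l₂ * α) * x)
          + (-(2 * θ * l₁)) * Real.exp (-(2 * l₁ + 2 * l₂ * α) * x)
          + (2 * θ * l₁) * Real.exp (-(2 * l₁ + l₂ * α) * x) := by
    intro x
    rw [gwed_inner (θ * (1 - 2 * Real.exp (-l₁ * x))) l₂ (α * x)]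
    exact gwed_expand l₁ l₂ α θ x
  simp only [hfun]
  have i1 : IntegrableOn (fun x : ℝ => l₁ * Real.exp (-l₁ * x)) (Set.Ioi 0) := gwed_exp_int _ _ hb1
  have i2 : IntegrableOn (fun x : ℝ => -(1 + θ) * l₁ * Real.exp (-(l₁ + l₂ * α) * x)) (Set.Ioi 0) := gwed_exp_int _ _ hb2
  have i3 : IntegrableOn (fun x : ℝ => θ * l₁ * Real.exp (-(l₁ + 2 * l₂ * α) * x)) (Set.Ioi 0) := gwed_exp_int _ _ hb3
  have i4 : IntegrableOn (fun x : ℝ => -(2 * θ * l₁) * Real.exp (-(2 * l₁ + 2 * l₂ * α) * x)) (Set.Ioi 0) := gwed_exp_int _ _ hb4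
  have i5 : IntegrableOn (fun x : ℝ => 2 * θ * l₁ * Real.exp (-(2 * l₁ + l₂ * α) * x)) (Set.Ioi 0) := gwed_exp_int _ _ hb5
  have i12 : IntegrableOn (fun x : ℝ => l₁ * Real.exp (-l₁ * x) + -(1 + θ) * l₁ * Real.exp (-(l₁ + l₂ * α) * x)) (Set.Ioi 0) := i1.add i2
  have i123 : IntegrableOn (fun x : ℝ => l₁ * Real.exp (-l₁ * x) + -(1 + θ) * l₁ * Real.exp (-(l₁ + l₂ * α) * x) + θ * l₁ * Real.exp (-(l₁ + 2 * l₂ * α) * x)) (Set.Ioi 0) := i12.add i3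
  have i1234 : IntegrableOn (fun x : ℝ => l₁ * Real.exp (-l₁ * x) + -(1 + θ) * l₁ * Real.exp (-(l₁ + l₂ * α) * x) + θ * l₁ * Real.exp (-(l₁ + 2 * l₂ * α) * x) + -(2 * θ * l₁) * Real.exp (-(2 * l₁ + 2 * l₂ * α) * x)) (Set.Ioi 0) := i123.add i4
  rw [MeasureTheory.integral_add i1234 i5, MeasureTheory.integral_add i123 i4,
      MeasureTheory.integral_add i12 i3, MeasureTheory.integral_add i1 i2,
      gwed_exp_val _ _ hb1, gwed_exp_val _ _ hb2, gwed_exp_val _ _ hb3,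
      gwed_exp_val _ _ hb4, gwed_exp_val _ _ hb5]
  field_simp
  ring
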